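/- Let a, b, n, m, R be integers with a ≥ 1, |b| < a, 0 ≤ n < a and 2a ≤ R, and let q = (m·b + n) div a be the unique integer with m·b + n = q·a + r for some r with 0 ≤ r < a. Then: (i) if |m| ≤ R then |q| ≤ R, and (ii) if |m| > R then |q| < |m|. -/
import Mathlib

/-- One-step invariance/decrease estimate used in Proposition 6.4:
if `q` and `r` are the unique integers with `m * b + n = q * a + r`,
`0 ≤ r < a`, where `a ≥ 1`, `|b| < a`, `0 ≤ n < a` and `2a ≤ R`, then
(i) `|m| ≤ R → |q| ≤ R` and (ii) `|m| > R → |q| < |m|`. -/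
theorem cocycle_step_estimate (a b n m R q r : ℤ)
    (ha : 1 ≤ a) (hb : |b| < a) (hn0 : 0 ≤ n) (hna : n < a)
    (hR : 2 * a ≤ R)
    (hdiv : m * b + n = q * a + r) (hr0 : 0 ≤ r) (hra : r < a) :
    (|m| ≤ R → |q| ≤ R) ∧ (R < |m| → |q| < |m|) := by
  have key : |q| * a ≤ (|m| + 1) * (a - 1) := by
    have h1 : q * a = m * b + (n - r) := by linarith
    have h2 : |q * a| ≤ |m * b| + |n - r| := by rw [h1]; exact abs_add_le _ _
    rw [abs_mul, abs_mul, abs_of_pos (by linarith : (0:ℤ) < a)] at h2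
    have hba : |b| ≤ a - 1 := by omega
    have hnr : |n - r| ≤ a - 1 := abs_le.mpr ⟨by linarith, by linarith⟩
    nlinarith [abs_nonneg q, abs_nonneg m, abs_nonneg b]
  refine ⟨fun hm => ?_, fun hm => ?_⟩
  · nlinarith [abs_nonneg q, abs_nonneg m]
  · nlinarith [abs_nonneg q, abs_nonneg m]
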